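/- Let q be a prime power, K a field containing F_q, and F, G ∈ K[A] arbitrary polynomials. Define D = (U^{q²} − U)/(U^q − U) ∈ F_q[U], E = U^q − U ∈ F_q[U], and P = D^{q+1}F^q − E^{q²−q}G^{q+1}, regarded as a polynomial in (K[A])[U]. Then: (i) for every b ∈ F_q, substituting U ↦ U + b in P yields P; (ii) for every nonzero a ∈ F_q, substituting U ↦ aU in P yields P; (iii) the polynomial U^{q³−q} · P(A, 1/U), i.e. the reversal of P in the variable U at degree q³ − q, equals P. In other words, P is invariant under the action of PGL₂(F_q) on the variable U. -/

import Mathlib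

open Polynomial

private lemma my_reflect_sum {R : Type*} [Semiring R] {ι : Type*} (s : Finset ι)
    (f : ι → R[X]) (N : ℕ) :
    reflect N (∑ i ∈ s, f i) = ∑ i ∈ s, reflect N (f i) := by
  classical
  induction s using Finset.induction with
  | empty => simp
  | insert _ _ h ih => rw [Finset.sum_insert h, Finset.sum_insert h, reflect_add, ih]

private lemma my_reflect_pow {R : Type*} [CommSemiring R] (f : R[X]) (N : ℕ)
    (hf : f.natDegree ≤ N) : ∀ n : ℕ, (f ^ n).reflect (n * N) = (f.reflect N) ^ n
  | 0 => by simp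
  | n + 1 => by
      rw [pow_succ, add_mul, one_mul,
        reflect_mul _ _ ((natDegree_pow_le).trans (Nat.mul_le_mul_left n hf)) hf,
        my_reflect_pow f N hf n, pow_succ]

private lemma my_telescope {R : Type*} [CommRing R] (q : ℕ) (hq : 1 ≤ q) :
    (∑ j ∈ Finset.range (q + 1), (X : R[X]) ^ (j * (q - 1))) * (X ^ q - X)
      = X ^ q ^ 2 - X := by
  obtain ⟨m, rfl⟩ : ∃ m, q = m + 1 := ⟨q - 1, by omega⟩
  rw [Finset.sum_mul]
  have key : ∀ j, (X : R[X]) ^ (j * (m + 1 - 1)) * (X ^ (m + 1) - X)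
      = X ^ ((j + 1) * m + 1) - X ^ (j * m + 1) := by
    intro j
    rw [Nat.add_sub_cancel, mul_sub, ← pow_add, ← pow_succ,
      show j * m + (m + 1) = (j + 1) * m + 1 by ring]
  rw [Finset.sum_congr rfl fun j _ => key j,
    Finset.sum_range_sub (fun j => (X : R[X]) ^ (j * m + 1)),
    show (m + 1 + 1) * m + 1 = (m + 1) ^ 2 by ring, zero_mul, zero_add, pow_one]

/-- Invariance of `P = D^{q+1}F^q - E^{q²-q}G^{q+1}` under the action of `PGL₂(F_q)`
on the variable `U`: it is invariant under `U ↦ U + b` for `b ∈ F_q`, under `U ↦ aU`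
for `a ∈ F_q ∖ {0}`, and under the reversal `U ↦ 1/U` at degree `q³ - q`.  Here
`P` lives in `(K[A])[U]`, with `U` the outer variable. -/
theorem stmt_16 (q : ℕ) (hq : IsPrimePow q)
    (K : Type) [Field K] (Fq : Subfield K) (hFq : Nat.card Fq = q)
    (F G : K[X])
    (D : Polynomial K[X])
    (hD : D * (X ^ q - X) = X ^ q ^ 2 - X)
    (P : Polynomial K[X])
    (hP : P = D ^ (q + 1) * Polynomial.C F ^ q
      - (X ^ q - X) ^ (q ^ 2 - q) * Polynomial.C G ^ (q + 1)) :
    (∀ b : K, b ∈ Fq → P.comp (X + Polynomial.C (Polynomial.C b)) = P) ∧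
    (∀ a : K, a ∈ Fq → a ≠ 0 → P.comp (Polynomial.C (Polynomial.C a) * X) = P) ∧
    P.reflect (q ^ 3 - q) = P := by
  have hq2 : 2 ≤ q := hq.two_le
  have hq1 : 1 ≤ q := by omega
  -- basic arithmetic identities
  have h2 : q ^ 2 = q * q := sq q
  have h3 : q ^ 3 = q * q * q := by ring
  have hqle : q ≤ q ^ 2 := by nlinarith
  have hqle2 : q ^ 2 ≤ q ^ 3 := by nlinarith
  have e1 : (q + 1) * (q ^ 2 - q) = q ^ 3 - q := by
    rw [mul_comm, tsub_mul]
    have t2 : q ^ 2 * (q + 1) = q ^ 3 + q ^ 2 := by ring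
    have t3 : q * (q + 1) = q ^ 2 + q := by ring
    omega
  have e2 : (q ^ 2 - q) * q = q ^ 3 - q ^ 2 := by
    rw [tsub_mul]
    have t2 : q ^ 2 * q = q ^ 3 := by ring
    omega
  have e3 : q ^ 3 - q = q ^ 3 - q ^ 2 + (q ^ 2 - q) := by omega
  have e4 : q * (q - 1) = q ^ 2 - q := by
    rw [Nat.mul_sub, mul_one]; omega
  have e5 : (q - 1) * q = q ^ 2 - q := by rw [mul_comm]; exact e4
  have heven : Even (q ^ 2 - q) := by
    have h := Nat.even_mul_succ_self (q - 1)
    rw [show q - 1 + 1 = q by omega, e5] at h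
    exact h
  -- E ≠ 0
  have hE0 : (X ^ q - X : Polynomial K[X]) ≠ 0 := by
    intro h
    have := congrArg (fun f : Polynomial K[X] => f.coeff q) h
    simp only [coeff_sub, coeff_X_pow, if_pos rfl, coeff_X,
      if_neg (show ¬(1 = q) by omega), coeff_zero, sub_zero] at this
    exact one_ne_zero this
  -- finite field facts
  haveI : Finite Fq := Nat.finite_of_card_ne_zero (by omega)
  haveI : Fintype Fq := Fintype.ofFinite Fq
  have hcard : Fintype.card Fq = q := by rw [← Nat.card_eq_fintype_card, hFq]
  have hbq : ∀ b : K, b ∈ Fq → b ^ q = b := by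
    intro b hb
    have h := FiniteField.pow_card (⟨b, hb⟩ : Fq)
    rw [hcard] at h
    have h2 := congrArg Fq.subtype h
    rw [map_pow] at h2
    simpa using h2
  -- characteristic
  obtain ⟨p, k, hpp, hk, hpk⟩ := hq
  have hp : p.Prime := hpp.nat_prime
  haveI : CharP Fq (ringChar Fq) := ringChar.charP Fq
  have hrp : (ringChar Fq).Prime := CharP.char_is_prime Fq (ringChar Fq)
  obtain ⟨n', hn', hcardr⟩ := FiniteField.card Fq (ringChar Fq)
  have hpr : p = ringChar Fq := by
    have h1 : p ∣ (ringChar Fq) ^ (n' : ℕ) := by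
      rw [← hcardr, hcard, ← hpk]
      exact dvd_pow_self p (by omega)
    exact (Nat.prime_dvd_prime_iff_eq hp hn').mp (hp.dvd_of_dvd_pow h1)
  haveI hCFq : CharP Fq p := hpr ▸ ringChar.charP Fq
  haveI hCK : CharP K p := charP_of_injective_ringHom Fq.subtype.injective p
  haveI : Fact p.Prime := ⟨hp⟩
  have hfrobq : ∀ x y : Polynomial K[X], (x + y) ^ q = x ^ q + y ^ q := by
    intro x y
    rw [← hpk]
    exact add_pow_char_pow x y p k
  -- D as an explicit sum
  have hDsum : D = ∑ j ∈ Finset.range (q + 1), (X : Polynomial K[X]) ^ (j * (q - 1)) :=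
    mul_right_cancel₀ hE0 (hD.trans (my_telescope q hq1).symm)
  have hDdeg : D.natDegree ≤ q ^ 2 - q := by
    rw [hDsum]
    refine natDegree_sum_le_of_forall_le _ _ fun j hj => ?_
    rw [natDegree_X_pow]
    calc j * (q - 1) ≤ q * (q - 1) :=
          Nat.mul_le_mul_right _ (by have := Finset.mem_range.mp hj; omega)
      _ = q ^ 2 - q := e4
  -- part (i): translations
  have part1 : ∀ b : K, b ∈ Fq → P.comp (X + Polynomial.C (Polynomial.C b)) = P := by
    intro b hb
    set c : Polynomial K[X] := Polynomial.C (Polynomial.C b) with hc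
    have hcq : c ^ q = c := by rw [hc, ← map_pow, ← map_pow, hbq b hb]
    have h1 : ((X : Polynomial K[X]) + c) ^ q = X ^ q + c := by rw [hfrobq, hcq]
    have h2' : ((X : Polynomial K[X]) + c) ^ q ^ 2 = X ^ q ^ 2 + c := by
      rw [h2, pow_mul, h1, hfrobq, hcq, ← pow_mul, ← h2]
    have hEb : ((X : Polynomial K[X]) ^ q - X).comp (X + c) = X ^ q - X := by
      simp only [sub_comp, X_pow_comp, X_comp]
      rw [h1]; ring
    have hE2b : ((X : Polynomial K[X]) ^ q ^ 2 - X).comp (X + c) = X ^ q ^ 2 - X := by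
      simp only [sub_comp, X_pow_comp, X_comp]
      rw [h2']; ring
    have hDb : D.comp (X + c) = D := by
      apply mul_right_cancel₀ hE0
      have hh := congrArg (fun f : Polynomial K[X] => f.comp (X + c)) hD
      simp only [mul_comp] at hh
      rw [hEb, hE2b] at hh
      rw [hh, ← hD]
    rw [hP]
    simp only [sub_comp, mul_comp, pow_comp, C_comp, sub_comp, X_pow_comp, X_comp]
    rw [hDb, h1, show (X : Polynomial K[X]) ^ q + c - (X + c) = X ^ q - X by ring]
  -- part (ii): scalings
  have part2 : ∀ a : K, a ∈ Fq → a ≠ 0 →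
      P.comp (Polynomial.C (Polynomial.C a) * X) = P := by
    intro a ha ha0
    set α : Polynomial K[X] := Polynomial.C (Polynomial.C a) with hα
    have hα0 : α ≠ 0 := by
      simp only [hα, ne_eq, Polynomial.C_eq_zero]
      exact ha0
    have hαq : α ^ q = α := by rw [hα, ← map_pow, ← map_pow, hbq a ha]
    have haq1 : a ^ (q ^ 2 - q) = 1 := by
      have h1 : a ^ (q - 1) * a = a := by
        rw [← pow_succ, show q - 1 + 1 = q by omega, hbq a ha]
      have h2' : a ^ (q - 1) = 1 := by
        have := mul_right_cancel₀ ha0 (h1.trans (one_mul a).symm)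
        exact this
      rw [← e5, pow_mul, h2', one_pow]
    have hαq1 : α ^ (q ^ 2 - q) = 1 := by
      rw [hα, ← map_pow, ← map_pow, haq1, map_one, map_one]
    have hEa : ((X : Polynomial K[X]) ^ q - X).comp (α * X) = α * (X ^ q - X) := by
      simp only [sub_comp, X_pow_comp, X_comp, mul_comp, C_comp]
      rw [mul_pow, hαq]; ring
    have hE2a : ((X : Polynomial K[X]) ^ q ^ 2 - X).comp (α * X) = α * (X ^ q ^ 2 - X) := by
      have hαq2 : α ^ q ^ 2 = α := by rw [h2, pow_mul, hαq, hαq]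
      simp only [sub_comp, X_pow_comp, X_comp, mul_comp, C_comp]
      rw [mul_pow, hαq2]; ring
    have hDa : D.comp (α * X) = D := by
      apply mul_right_cancel₀ hE0
      apply mul_left_cancel₀ hα0
      have hh := congrArg (fun f : Polynomial K[X] => f.comp (α * X)) hD
      simp only [mul_comp] at hh
      rw [hEa, hE2a, ← hD] at hh
      linear_combination hh
    rw [hP]
    simp only [sub_comp, mul_comp, pow_comp, C_comp, sub_comp, X_pow_comp, X_comp]
    rw [hDa, mul_pow, hαq,
      show α * X ^ q - α * X = α * (X ^ q - X) by ring, mul_pow, hαq1, one_mul]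
  -- part (iii): reflection
  refine ⟨part1, part2, ?_⟩
  have hEdeg : ((X : Polynomial K[X]) ^ q - X).natDegree ≤ q := by
    refine natDegree_sub_le_iff_left ?_ |>.mpr ?_
    · rw [natDegree_X]; omega
    · rw [natDegree_X_pow]
  have hrefD : D.reflect (q ^ 2 - q) = D := by
    rw [hDsum, my_reflect_sum]
    conv_rhs => rw [← Finset.sum_range_reflect]
    refine Finset.sum_congr rfl fun j hj => ?_
    have hjq : j ≤ q := by have := Finset.mem_range.mp hj; omega
    have hle : j * (q - 1) ≤ q ^ 2 - q := by
      calc j * (q - 1) ≤ q * (q - 1) := Nat.mul_le_mul_right _ hjq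
        _ = q ^ 2 - q := e4
    rw [reflect_monomial, revAt_le hle]
    congr 1
    have u : (q + 1 - 1 - j) * (q - 1) = q * (q - 1) - j * (q - 1) := by
      rw [show q + 1 - 1 - j = q - j by omega, tsub_mul]
    have v : j * (q - 1) ≤ q * (q - 1) := Nat.mul_le_mul_right _ hjq
    omega
  have hrefE : ((X : Polynomial K[X]) ^ q - X).reflect q = 1 - X ^ (q - 1) := by
    rw [show (X : Polynomial K[X]) ^ q - X = X ^ q - X ^ 1 by rw [pow_one],
      reflect_sub, reflect_monomial, reflect_monomial, revAt_le (le_refl q),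
      revAt_le hq1, Nat.sub_self, pow_zero]
  have hT1 : (D ^ (q + 1) * Polynomial.C F ^ q).reflect (q ^ 3 - q)
      = D ^ (q + 1) * Polynomial.C F ^ q := by
    have hb1 : (D ^ (q + 1)).natDegree ≤ q ^ 3 - q := by
      refine natDegree_pow_le.trans ?_
      calc (q + 1) * D.natDegree ≤ (q + 1) * (q ^ 2 - q) := Nat.mul_le_mul_left _ hDdeg
        _ = q ^ 3 - q := e1
    have hb2 : (Polynomial.C F ^ q : Polynomial K[X]).natDegree ≤ 0 := by
      rw [← map_pow, natDegree_C]
    have hmul := reflect_mul (D ^ (q + 1)) (Polynomial.C F ^ q) hb1 hb2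
    rw [Nat.add_zero] at hmul
    rw [hmul, show q ^ 3 - q = (q + 1) * (q ^ 2 - q) from e1.symm,
      my_reflect_pow D _ hDdeg, hrefD, ← map_pow, reflect_C, pow_zero, mul_one, map_pow]
  have hT2 : (((X : Polynomial K[X]) ^ q - X) ^ (q ^ 2 - q)
        * Polynomial.C G ^ (q + 1)).reflect (q ^ 3 - q)
      = ((X : Polynomial K[X]) ^ q - X) ^ (q ^ 2 - q) * Polynomial.C G ^ (q + 1) := by
    have hb1 : (((X : Polynomial K[X]) ^ q - X) ^ (q ^ 2 - q)).natDegree ≤ q ^ 3 - q ^ 2 := by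
      refine natDegree_pow_le.trans ?_
      calc (q ^ 2 - q) * ((X : Polynomial K[X]) ^ q - X).natDegree
          ≤ (q ^ 2 - q) * q := Nat.mul_le_mul_left _ hEdeg
        _ = q ^ 3 - q ^ 2 := e2
    have hb2 : (Polynomial.C G ^ (q + 1) : Polynomial K[X]).natDegree ≤ q ^ 2 - q := by
      rw [← map_pow, natDegree_C]; omega
    rw [e3, reflect_mul _ _ hb1 hb2,
      show q ^ 3 - q ^ 2 = (q ^ 2 - q) * q from e2.symm,
      my_reflect_pow _ _ hEdeg, hrefE, ← map_pow, reflect_C, map_pow]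
    have hcomb : ((1 : Polynomial K[X]) - X ^ (q - 1)) ^ (q ^ 2 - q) * X ^ (q ^ 2 - q)
        = ((X : Polynomial K[X]) ^ q - X) ^ (q ^ 2 - q) := by
      rw [← mul_pow,
        show ((1 : Polynomial K[X]) - X ^ (q - 1)) * X = -((X : Polynomial K[X]) ^ q - X) by
          rw [sub_mul, one_mul, ← pow_succ, show q - 1 + 1 = q by omega]; ring]
      exact Even.neg_pow heven ((X : Polynomial K[X]) ^ q - X)
    calc ((1 : Polynomial K[X]) - X ^ (q - 1)) ^ (q ^ 2 - q)
          * (Polynomial.C G ^ (q + 1) * X ^ (q ^ 2 - q))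
        = (((1 : Polynomial K[X]) - X ^ (q - 1)) ^ (q ^ 2 - q) * X ^ (q ^ 2 - q))
          * Polynomial.C G ^ (q + 1) := by ring
      _ = ((X : Polynomial K[X]) ^ q - X) ^ (q ^ 2 - q) * Polynomial.C G ^ (q + 1) := by
          rw [hcomb]
  rw [hP, reflect_sub, hT1, hT2]
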